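/- Let D : J ⥤ C and E : K ⥤ C be small diagrams with naturally isomorphic image presheaves. Then for every category D' and functor F : C ⥤ D', the diagram F ∘ D admits a colimit if and only if F ∘ E does, and in that case the two colimits are isomorphic. -/

import Mathlib

open CategoryTheory CategoryTheory.Limits

universe v u v2 u2

namespace Stmt6Aux

open Opposite

noncomputable section

variable {C : Type u} [Category.{v} C] {D' : Type u2} [Category.{v2} D']

/-- Universe-lifting on presheaves. -/
abbrev WF (C : Type u) [Category.{v} C] : (Cᵒᵖ ⥤ Type v) ⥤ (Cᵒᵖ ⥤ Type (max v v2)) :=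
  (Functor.whiskeringRight Cᵒᵖ (Type v) (Type (max v v2))).obj uliftFunctor.{v2, v}

/-- `X ↦ (c ↦ ULift (F.obj c ⟶ X))` as a functor `D' ⥤ Cᵒᵖ ⥤ Type (max v v2)`. -/
def Pfun (F : C ⥤ D') : D' ⥤ Cᵒᵖ ⥤ Type (max v v2) :=
  yoneda ⋙ (Functor.whiskeringLeft Cᵒᵖ D'ᵒᵖ (Type v2)).obj F.op ⋙
    (Functor.whiskeringRight Cᵒᵖ (Type v2) (Type (max v v2))).obj uliftFunctor.{v, v2}

variable {J : Type v} [SmallCategory J]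

/-- The lifted image presheaf. -/
abbrev A (G : J ⥤ C) : Cᵒᵖ ⥤ Type (max v v2) :=
  (WF.{v, u, v2} C).obj (colimit (G ⋙ yoneda))

/-- The lifted colimit cocone. -/
def cc (G : J ⥤ C) : Cocone ((G ⋙ yoneda) ⋙ WF.{v, u, v2} C) :=
  (WF.{v, u, v2} C).mapCocone (colimit.cocone (G ⋙ yoneda))

def hcc (G : J ⥤ C) : IsColimit (cc.{v, u, v2} G) :=
  isColimitOfPreserves _ (colimit.isColimit (G ⋙ yoneda))

variable (F : C ⥤ D')

/-- Evaluation lemma: a natural map out of a lifted representable is determined by its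
value at the identity. -/
theorem eval_eq {G : J ⥤ C} {X : D'} {j : J}
    (ψ : ((G ⋙ yoneda) ⋙ WF.{v, u, v2} C).obj j ⟶ (Pfun F).obj X)
    {a : C} (g : a ⟶ G.obj j) :
    ψ.app (op a) (ULift.up g) = ULift.up (F.map g ≫ (ψ.app (op (G.obj j)) (ULift.up (𝟙 _))).down) := by
  have h := NatTrans.naturality_apply ψ g.op (show ULift.{v2} (G.obj j ⟶ G.obj j) from ULift.up (𝟙 (G.obj j)))
  dsimp [Pfun, WF] at h ⊢
  change ψ.app (op a) (ULift.up (g ≫ 𝟙 _)) =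
    ULift.up (F.map g ≫ (ψ.app (op (G.obj j)) (ULift.up (𝟙 _))).down) at h
  rw [Category.comp_id] at h
  exact h

/-- The cocone on the lifted image diagram associated to a cocone on `G ⋙ F`. -/
def legsCocone (G : J ⥤ C) {X : D'} (τ : (G ⋙ F) ⟶ (Functor.const J).obj X) :
    Cocone ((G ⋙ yoneda) ⋙ WF.{v, u, v2} C) where
  pt := (Pfun F).obj X
  ι :=
    { app := fun j =>
        { app := fun a => TypeCat.ofHom fun g => ULift.up (F.map g.down ≫ τ.app j)
          naturality := fun a b f => by
            ext g
            dsimp [Pfun, WF]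
            change ULift.up (F.map (f.unop ≫ ULift.down g) ≫ τ.app j) =
              ULift.up (F.map f.unop ≫ F.map (ULift.down g) ≫ τ.app j)
            rw [F.map_comp, Category.assoc] }
      naturality := fun j j' m => by
        ext a g
        have hτ := τ.naturality m
        dsimp at hτ ⊢
        rw [Category.comp_id] at hτ
        change ULift.up (F.map (ULift.down g ≫ G.map m) ≫ τ.app j') =
          ULift.up (F.map (ULift.down g) ≫ τ.app j)
        rw [F.map_comp, Category.assoc, hτ] }

/-- Cocones on `G ⋙ F` with apex `X` correspond to maps out of the lifted image presheaf. -/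
def eqv (G : J ⥤ C) (X : D') :
    ((G ⋙ F) ⟶ (Functor.const J).obj X) ≃ (A.{v, u, v2} G ⟶ (Pfun F).obj X) where
  toFun τ := (hcc G).desc (legsCocone F G τ)
  invFun φ :=
    { app := fun j =>
        (((cc.{v, u, v2} G).ι.app j ≫ φ).app (op (G.obj j)) (ULift.up (𝟙 _))).down
      naturality := fun j j' m => by
        have hw : (cc.{v, u, v2} G).ι.app j =
            ((G ⋙ yoneda) ⋙ WF.{v, u, v2} C).map m ≫ (cc.{v, u, v2} G).ι.app j' :=
          ((cc.{v, u, v2} G).ι.naturality m).symm.trans (by simp)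
        have e1 : (((cc.{v, u, v2} G).ι.app j ≫ φ).app (op (G.obj j)) (ULift.up (𝟙 _))) =
            (((cc.{v, u, v2} G).ι.app j' ≫ φ).app (op (G.obj j)) (ULift.up (G.map m))) := by
          rw [hw]
          dsimp [WF]
          change (((cc.{v, u, v2} G).ι.app j' ≫ φ).app (op (G.obj j)))
            (ULift.up (𝟙 (G.obj j) ≫ G.map m)) = _
          rw [Category.id_comp]
        have e2 := eval_eq F ((cc.{v, u, v2} G).ι.app j' ≫ φ) (G.map m)
        simp only [Functor.const_obj_map, Category.comp_id]
        simpa using (congrArg ULift.down (e1.trans e2)).symm }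
  left_inv τ := by
    ext j
    have hfac := (hcc G).fac (legsCocone F G τ) j
    dsimp only
    erw [hfac]
    dsimp [legsCocone]
    change F.map (𝟙 (G.obj j)) ≫ τ.app j = τ.app j
    simp
  right_inv φ := by
    apply (hcc G).hom_ext
    intro j
    rw [(hcc G).fac]
    ext a g
    obtain ⟨a⟩ := a
    change ULift.{v2} (a ⟶ G.obj j) at g
    obtain ⟨g⟩ := g
    have h2 := eval_eq F ((cc.{v, u, v2} G).ι.app j ≫ φ) g
    dsimp [legsCocone] at h2 ⊢
    exact h2.symm

theorem eqv_apply (G : J ⥤ C) (X : D') (τ : (G ⋙ F) ⟶ (Functor.const J).obj X) :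
    eqv F G X τ = (hcc G).desc (legsCocone F G τ) :=
  rfl

theorem eqv_comp (G : J ⥤ C) {X X' : D'} (τ : (G ⋙ F) ⟶ (Functor.const J).obj X)
    (g : X ⟶ X') :
    eqv F G X' (τ ≫ (Functor.const J).map g) = eqv F G X τ ≫ (Pfun F).map g := by
  apply (hcc G).hom_ext
  intro j
  erw [eqv_apply, eqv_apply, (hcc G).fac, ← Category.assoc, (hcc G).fac]
  ext a u
  dsimp [legsCocone, Pfun]
  change ULift.up (F.map (ULift.down u) ≫ τ.app j ≫ g) =
    ULift.up ((F.map (ULift.down u) ≫ τ.app j) ≫ g)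
  rw [Category.assoc]

theorem eqv_symm_comp (G : J ⥤ C) {X X' : D'} (φ : A.{v, u, v2} G ⟶ (Pfun F).obj X)
    (g : X ⟶ X') :
    (eqv F G X').symm (φ ≫ (Pfun F).map g) =
      (eqv F G X).symm φ ≫ (Functor.const J).map g := by
  apply (eqv F G X').injective
  rw [Equiv.apply_symm_apply, eqv_comp, Equiv.apply_symm_apply]

variable {K : Type v} [SmallCategory K]

/-- Transfer a cocone along an isomorphism of lifted image presheaves. -/
def T (D : J ⥤ C) (E : K ⥤ C) (Φ : A.{v, u, v2} D ≅ A.{v, u, v2} E)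
    (c : Cocone (D ⋙ F)) : Cocone (E ⋙ F) where
  pt := c.pt
  ι := (eqv F E c.pt).symm (Φ.inv ≫ eqv F D c.pt c.ι)

theorem T_comp (D : J ⥤ C) (E : K ⥤ C) (Φ : A.{v, u, v2} D ≅ A.{v, u, v2} E)
    (c : Cocone (D ⋙ F)) {X : D'} (m : c.pt ⟶ X) :
    (T F D E Φ c).ι ≫ (Functor.const K).map m =
      (eqv F E X).symm (Φ.inv ≫ eqv F D X (c.ι ≫ (Functor.const J).map m)) := by
  dsimp only [T]
  rw [← eqv_symm_comp, eqv_comp, Category.assoc]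

/-- The transferred cocone of a colimit cocone is a colimit cocone. -/
def TisColimit (D : J ⥤ C) (E : K ⥤ C) (Φ : A.{v, u, v2} D ≅ A.{v, u, v2} E)
    (c : Cocone (D ⋙ F)) (hc : IsColimit c) : IsColimit (T F D E Φ c) where
  desc e := hc.desc ⟨e.pt, (eqv F D e.pt).symm (Φ.hom ≫ eqv F E e.pt e.ι)⟩
  fac e k := by
    have key : (T F D E Φ c).ι ≫ (Functor.const K).map
        (hc.desc ⟨e.pt, (eqv F D e.pt).symm (Φ.hom ≫ eqv F E e.pt e.ι)⟩) = e.ι := by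
      rw [T_comp]
      have hext : c.ι ≫ (Functor.const J).map
          (hc.desc ⟨e.pt, (eqv F D e.pt).symm (Φ.hom ≫ eqv F E e.pt e.ι)⟩) =
          (eqv F D e.pt).symm (Φ.hom ≫ eqv F E e.pt e.ι) := by
        ext j
        exact hc.fac _ j
      rw [hext, Equiv.apply_symm_apply, ← Category.assoc, Iso.inv_hom_id,
        Category.id_comp, Equiv.symm_apply_apply]
    exact congrArg (fun t => t.app k) key
  uniq e m w := by
    apply hc.uniq ⟨e.pt, (eqv F D e.pt).symm (Φ.hom ≫ eqv F E e.pt e.ι)⟩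
    intro j
    have hw : (T F D E Φ c).ι ≫ (Functor.const K).map m = e.ι := by
      ext k; exact w k
    erw [T_comp] at hw
    have := congrArg (fun t => Φ.hom ≫ (eqv F E e.pt) t) hw.symm
    rw [Equiv.apply_symm_apply, ← Category.assoc, Iso.hom_inv_id, Category.id_comp]
      at this
    have h2 := congrArg (eqv F D e.pt).symm this
    rw [Equiv.symm_apply_apply] at h2
    exact congrArg (fun t => t.app j) h2.symm

end
end Stmt6Aux

open Stmt6Aux in
/-- If two small diagrams `D : J ⥤ C` and `E : K ⥤ C` have naturally isomorphic image
presheaves, then for every functor `F : C ⥤ D'`, `D ⋙ F` admits a colimit iff `E ⋙ F`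
does, and in that case the colimits are isomorphic. -/
theorem stmt6 {J : Type v} [SmallCategory J] {K : Type v} [SmallCategory K]
    {C : Type u} [Category.{v} C] (D : J ⥤ C) (E : K ⥤ C)
    (h : Nonempty (colimit (D ⋙ yoneda) ≅ colimit (E ⋙ yoneda)))
    {D' : Type u2} [Category.{v2} D'] (F : C ⥤ D') :
    (HasColimit (D ⋙ F) ↔ HasColimit (E ⋙ F)) ∧
      (∀ (_ : HasColimit (D ⋙ F)) (_ : HasColimit (E ⋙ F)),
        Nonempty (colimit (D ⋙ F) ≅ colimit (E ⋙ F))) := by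
  obtain ⟨φ⟩ := h
  have Φ : A.{v, u, v2} D ≅ A.{v, u, v2} E := (WF.{v, u, v2} C).mapIso φ
  constructor
  · constructor
    · intro hD
      exact HasColimit.mk ⟨T F D E Φ (colimit.cocone (D ⋙ F)),
        TisColimit F D E Φ _ (colimit.isColimit _)⟩
    · intro hE
      exact HasColimit.mk ⟨T F E D Φ.symm (colimit.cocone (E ⋙ F)),
        TisColimit F E D Φ.symm _ (colimit.isColimit _)⟩
  · intro hD hE
    exact ⟨(IsColimit.coconePointUniqueUpToIso
        (TisColimit F D E Φ (colimit.cocone (D ⋙ F)) (colimit.isColimit _))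
        (colimit.isColimit (E ⋙ F)))⟩
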